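/- Let A be an n×n real symmetric matrix with all entries a_{i,j} satisfying 0 < c ≤ a_{i,j} ≤ b. If x is the Perron eigenvector of A with positive entries and Euclidean norm 1, and λ is the Perron eigenvalue, then every entry x_i satisfies c/(b·√n) ≤ x_i ≤ b/(c·√n). -/
import Mathlib


/-- Entrywise bounds on the normalized Perron eigenvector of a symmetric matrix
with entries in `[c, b]`. -/
theorem perron_eigenvector_entry_bounds (n : ℕ) (A : Matrix (Fin n) (Fin n) ℝ)
    (c b : ℝ) (hA : A.IsSymm) (hc : 0 < c) (hcb : c ≤ b)
    (hbound : ∀ i j, c ≤ A i j ∧ A i j ≤ b)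
    (x : Fin n → ℝ) (lam : ℝ)
    (hxpos : ∀ i, 0 < x i) (hxnorm : ∑ i, x i ^ 2 = 1)
    (heig : A.mulVec x = lam • x)
    (hmem : lam ∈ spectrum ℝ A) (hmax : ∀ μ ∈ spectrum ℝ A, |μ| ≤ lam) :
    ∀ i, c / (b * Real.sqrt n) ≤ x i ∧ x i ≤ b / (c * Real.sqrt n) := by
  intro i
  have hb : (0:ℝ) < b := hc.trans_le hcb
  have hn : 0 < n := i.pos
  set S := ∑ k, x k with hSdef
  have hS : 0 < S := Finset.sum_pos (fun k _ => hxpos k) ⟨i, Finset.mem_univ i⟩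
  have key : ∀ j, c * S ≤ lam * x j ∧ lam * x j ≤ b * S := by
    intro j
    have h1 : ∑ k, A j k * x k = lam * x j := by
      have := congrFun heig j
      simpa [Matrix.mulVec, dotProduct] using this
    constructor
    · calc c * S = ∑ k, c * x k := Finset.mul_sum _ _ _
        _ ≤ ∑ k, A j k * x k :=
          Finset.sum_le_sum fun k _ =>
            mul_le_mul_of_nonneg_right (hbound j k).1 (hxpos k).le
        _ = lam * x j := h1
    · calc lam * x j = ∑ k, A j k * x k := h1.symm
        _ ≤ ∑ k, b * x k :=
          Finset.sum_le_sum fun k _ =>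
            mul_le_mul_of_nonneg_right (hbound j k).2 (hxpos k).le
        _ = b * S := (Finset.mul_sum _ _ _).symm
  have hlam : 0 < lam := by
    have := (key i).1
    nlinarith [hxpos i, hS, hc]
  have ratio : ∀ j k, c * x j ≤ b * x k := by
    intro j k
    have h1 := (key j).2
    have h2 := (key k).1
    nlinarith [hxpos j, hxpos k]
  have ht : Real.sqrt n * Real.sqrt n = n := Real.mul_self_sqrt (Nat.cast_nonneg n)
  have htpos : 0 < Real.sqrt n := Real.sqrt_pos.mpr (by exact_mod_cast hn)
  constructor
  · have hup : c ^ 2 ≤ (n : ℝ) * (b * x i) ^ 2 := by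
      calc c ^ 2 = ∑ j, (c * x j) ^ 2 := by
            simp [mul_pow, ← Finset.mul_sum, hxnorm]
        _ ≤ ∑ _j : Fin n, (b * x i) ^ 2 :=
            Finset.sum_le_sum fun j _ =>
              pow_le_pow_left₀ (mul_nonneg hc.le (hxpos j).le) (ratio j i) 2
        _ = (n : ℝ) * (b * x i) ^ 2 := by
            simp [Finset.sum_const, Finset.card_univ, mul_comm]
    have hsq : (c / (b * Real.sqrt n)) ^ 2 ≤ (x i) ^ 2 := by
      rw [div_pow, div_le_iff₀ (by positivity)]
      have h2 : (b * Real.sqrt n) ^ 2 = b ^ 2 * n := by ring_nf; nlinarith [ht]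
      rw [h2]; nlinarith [hup]
    have := Real.sqrt_le_sqrt hsq
    rwa [Real.sqrt_sq (by positivity), Real.sqrt_sq (hxpos i).le] at this
  · have hlo : (n : ℝ) * (c * x i) ^ 2 ≤ b ^ 2 := by
      calc (n : ℝ) * (c * x i) ^ 2
          = ∑ _j : Fin n, (c * x i) ^ 2 := by
            simp [Finset.sum_const, Finset.card_univ, mul_comm]
        _ ≤ ∑ j, (b * x j) ^ 2 :=
            Finset.sum_le_sum fun j _ =>
              pow_le_pow_left₀ (mul_nonneg hc.le (hxpos i).le) (ratio i j) 2
        _ = b ^ 2 := by simp [mul_pow, ← Finset.mul_sum, hxnorm]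
    have hsq : (x i) ^ 2 ≤ (b / (c * Real.sqrt n)) ^ 2 := by
      rw [div_pow, le_div_iff₀ (by positivity)]
      have h2 : (c * Real.sqrt n) ^ 2 = c ^ 2 * n := by ring_nf; nlinarith [ht]
      rw [h2]; nlinarith [hlo]
    have := Real.sqrt_le_sqrt hsq
    rwa [Real.sqrt_sq (hxpos i).le, Real.sqrt_sq (by positivity)] at this
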